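/- Let v = (v_0,...,v_{2k}) ∈ ℝ^{2k+1} with v_0 > 0 be a singular sequence of rank r ≤ k with A_v positive semidefinite and positively recursively generated. Define v_{2k+1} and v_{2k+2} by the recursion v_j = φ_0 v_{j-r} + ... + φ_{r-1} v_{j-1} for j = 2k+1, 2k+2. Then these are the unique real numbers such that the extended Hankel matrix A_{(v,v_{2k+1},v_{2k+2})} of size (k+2)×(k+2) is positive semidefinite with the same rank as A_v. -/

import Mathlib

open Matrix MeasureTheory

noncomputable section

/-- The `(k+1) × (k+1)` Hankel matrix `A_v = (v_{i+j})_{i,j=0}^k`. -/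
def hankel (k : ℕ) (v : ℕ → ℝ) : Matrix (Fin (k+1)) (Fin (k+1)) ℝ :=
  Matrix.of fun i j => v (i.1 + j.1)

/-- The top-left `r × r` corner `A_v(r-1) = (v_{i+j})_{i,j=0}^{r-1}`. -/
def hcorner (v : ℕ → ℝ) (r : ℕ) : Matrix (Fin r) (Fin r) ℝ :=
  Matrix.of fun i j => v (i.1 + j.1)

/-- The `(j+1)`-th column of the Hankel matrix `A_v`. -/
def hcol (k : ℕ) (v : ℕ → ℝ) (j : ℕ) : Fin (k+1) → ℝ :=
  fun i => v (i.1 + j)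

/-- `r = rank v`: column `v_r` lies in the span of the preceding columns, and `r`
is minimal with this property. -/
def seqRank (k : ℕ) (v : ℕ → ℝ) (r : ℕ) : Prop :=
  hcol k v r ∈ Submodule.span ℝ (hcol k v '' {j | j < r}) ∧
  ∀ i < r, hcol k v i ∉ Submodule.span ℝ (hcol k v '' {j | j < i})

/-- `φ = A_v(r-1)⁻¹ (v_r,…,v_{2r-1})ᵀ`. -/
def phi (v : ℕ → ℝ) (r : ℕ) : Fin r → ℝ :=
  (hcorner v r)⁻¹.mulVec fun i => v (r + i.1)

lemma li_of_chain {V : Type*} [AddCommGroup V] [Module ℝ V] (f : ℕ → V) :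
    ∀ r : ℕ, (∀ i < r, f i ∉ Submodule.span ℝ (f '' {j | j < i})) →
      LinearIndependent ℝ (fun m : Fin r => f m.1) := by
  intro r
  induction r with
  | zero => intro _; exact linearIndependent_empty_type
  | succ n ih =>
    intro h
    have hfam : (fun m : Fin (n+1) => f m.1) = Fin.snoc (fun m : Fin n => f m.1) (f n) := by
      funext m
      refine Fin.lastCases ?_ (fun i => ?_) m
      · simp [Fin.snoc_last]
      · simp [Fin.snoc_castSucc]
    rw [hfam, linearIndependent_fin_snoc]
    refine ⟨ih (fun i hi => h i (hi.trans (Nat.lt_succ_self n))), ?_⟩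
    have hrange : Set.range (fun m : Fin n => f m.1) = f '' {j | j < n} := by
      ext x
      constructor
      · rintro ⟨m, rfl⟩; exact ⟨m.1, m.2, rfl⟩
      · rintro ⟨j, hj, rfl⟩; exact ⟨⟨j, hj⟩, rfl⟩
    rw [hrange]
    exact h n (Nat.lt_succ_self n)

lemma sum_cut {r K : ℕ} (hrK : r ≤ K) (F : ℕ → ℝ) (hF : ∀ j, r ≤ j → F j = 0) :
    ∑ j : Fin K, F j.1 = ∑ a : Fin r, F a.1 := by
  rw [Fin.sum_univ_eq_sum_range, Fin.sum_univ_eq_sum_range]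
  exact (Finset.sum_subset (Finset.range_subset_range.2 hrK)
    (fun j _ hj => hF j (by simpa using hj))).symm

theorem stmt4 (k r : ℕ) (v u : ℕ → ℝ) (hv0 : 0 < v 0)
    (hpsd : (hankel k v).PosSemidef) (hsing : (hankel k v).det = 0)
    (hr : r ≤ k) (hrank : seqRank k v r)
    (hprg : ∀ j, r ≤ j → j ≤ 2*k → v j = ∑ i : Fin r, phi v r i * v (j - r + i.1))
    (hu : ∀ j ≤ 2*k, u j = v j)
    (hu1 : u (2*k+1) = ∑ i : Fin r, phi v r i * u (2*k+1 - r + i.1))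
    (hu2 : u (2*k+2) = ∑ i : Fin r, phi v r i * u (2*k+2 - r + i.1)) :
    (hankel (k+1) u).PosSemidef ∧ (hankel (k+1) u).rank = (hankel k v).rank ∧
    ∀ w : ℕ → ℝ, (∀ j ≤ 2*k, w j = v j) → (hankel (k+1) w).PosSemidef →
      (hankel (k+1) w).rank = (hankel k v).rank →
      w (2*k+1) = u (2*k+1) ∧ w (2*k+2) = u (2*k+2) := by
  -- r ≥ 1
  have hr0 : 0 < r := by
    rcases Nat.eq_zero_or_pos r with rfl | h
    · have := hprg 0 le_rfl (by omega)
      simp at this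
      linarith
    · exact h
  -- linear independence of first r columns of A_v
  have hli : LinearIndependent ℝ (fun m : Fin r => hcol k v m.1) := li_of_chain _ r hrank.2
  -- M is PSD
  have e : Fin r → Fin (k+1) := fun a => ⟨a.1, by omega⟩
  have hMsub : hcorner v r = (hankel k v).submatrix (fun a : Fin r => (⟨a.1, by omega⟩ : Fin (k+1)))
      (fun a : Fin r => (⟨a.1, by omega⟩ : Fin (k+1))) := rfl
  have hMpsd : (hcorner v r).PosSemidef := by rw [hMsub]; exact hpsd.submatrix _
  -- M is PD
  have hMpd : (hcorner v r).PosDef := by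
    refine .of_dotProduct_mulVec_pos hMpsd.1 (fun x hx => ?_)
    rcases (hMpsd.dotProduct_mulVec_nonneg x).lt_or_eq with hlt | heq
    · exact hlt
    · exfalso
      set x' : ℕ → ℝ := fun n => if h : n < r then x ⟨n, h⟩ else 0 with hx'
      set xb : Fin (k+1) → ℝ := fun i => x' i.1 with hxb
      have hx'0 : ∀ j, r ≤ j → x' j = 0 := fun j hj => dif_neg (by omega)
      have hx'a : ∀ a : Fin r, x' a.1 = x a := fun a => by rw [hx']; simp [a.2]
      set S : ℕ → ℝ := fun n => ∑ a : Fin r, v (n + a.1) * x a with hS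
      have hmv : ∀ i : Fin (k+1), ((hankel k v) *ᵥ xb) i = S i.1 := by
        intro i
        have h1 : ((hankel k v) *ᵥ xb) i = ∑ j : Fin (k+1), v (i.1 + j.1) * x' j.1 := by
          simp [Matrix.mulVec, dotProduct, hankel, xb]
        rw [h1, sum_cut (r := r) (K := k+1) (by omega) (fun j => v (i.1 + j) * x' j)
          (fun j hj => by simp [hx'0 j hj])]
        exact Finset.sum_congr rfl fun a _ => by rw [hx'a a]
      have hquad : star xb ⬝ᵥ (hankel k v) *ᵥ xb = star x ⬝ᵥ (hcorner v r) *ᵥ x := by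
        have hs1 : star xb = xb := by ext i; simp
        have hs2 : star x = x := by ext i; simp
        rw [hs1, hs2]
        have h2 : xb ⬝ᵥ (hankel k v) *ᵥ xb = ∑ i : Fin (k+1), x' i.1 * S i.1 := by
          simp only [dotProduct]
          exact Finset.sum_congr rfl fun i _ => by rw [hmv i]
        rw [h2, sum_cut (r := r) (K := k+1) (by omega) (fun n => x' n * S n)
          (fun j hj => by simp [hx'0 j hj])]
        simp only [dotProduct, Matrix.mulVec, hcorner, Matrix.of_apply]
        exact Finset.sum_congr rfl fun a _ => by rw [hx'a a]
      rw [← hquad] at heq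
      have hker := (hpsd.dotProduct_mulVec_zero_iff xb).1 heq.symm
      have hcomb : ∑ a : Fin r, x a • hcol k v a.1 = 0 := by
        funext i
        have h0 : ((hankel k v) *ᵥ xb) i = 0 := congrFun hker i
        rw [hmv] at h0
        have h0' : ∑ a : Fin r, v (i.1 + a.1) * x a = 0 := h0
        simp only [Finset.sum_apply, Pi.smul_apply, smul_eq_mul, hcol, Pi.zero_apply]
        rw [← h0']
        exact Finset.sum_congr rfl fun a _ => mul_comm _ _
      have := Fintype.linearIndependent_iff.1 hli x hcomb
      exact hx (funext fun a => this a)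
  have hMdet : IsUnit (hcorner v r).det := hMpd.det_pos.ne'.isUnit
  -- the recursion for u on the whole range
  have urec : ∀ n, r ≤ n → n ≤ 2*k+2 → u n = ∑ m : Fin r, phi v r m * u (n - r + m.1) := by
    intro n hrn hn
    rcases Nat.lt_or_ge n (2*k+1) with h | h
    · rw [hu n (by omega), hprg n hrn (by omega)]
      refine Finset.sum_congr rfl fun m _ => ?_
      rw [hu (n - r + m.1) (by have := m.2; omega)]
    · have : n = 2*k+1 ∨ n = 2*k+2 := by omega
      rcases this with rfl | rfl
      · exact hu1
      · exact hu2
  -- existence of coefficients expressing each column in terms of the first r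
  have hcoef0 : ∀ j : ℕ, j < k+2 → ∃ c : Fin r → ℝ,
      ∀ i : Fin (k+2), u (i.1 + j) = ∑ m : Fin r, c m * u (i.1 + m.1) := by
    intro j
    induction j using Nat.strong_induction_on with
    | _ j ih =>
      intro hj
      by_cases hjr : j < r
      · refine ⟨fun m => if m.1 = j then 1 else 0, fun i => ?_⟩
        rw [Finset.sum_eq_single (⟨j, hjr⟩ : Fin r)]
        · simp
        · intro b _ hb
          have : b.1 ≠ j := fun hbj => hb (Fin.ext hbj)
          simp [this]
        · intro habs; exact absurd (Finset.mem_univ _) habs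
      · push_neg at hjr
        choose cs hcs using fun m : Fin r => ih (j - r + m.1) (by have := m.2; omega)
          (by have := m.2; omega)
        refine ⟨fun n => ∑ m : Fin r, phi v r m * cs m n, fun i => ?_⟩
        have hi2 : i.1 < k + 2 := i.2
        calc u (i.1 + j) = ∑ m : Fin r, phi v r m * u (i.1 + j - r + m.1) :=
              urec (i.1 + j) (by omega) (by omega)
          _ = ∑ m : Fin r, phi v r m * u (i.1 + (j - r + m.1)) := by
              refine Finset.sum_congr rfl fun m _ => ?_
              congr 2
              omega
          _ = ∑ m : Fin r, phi v r m * ∑ n : Fin r, cs m n * u (i.1 + n.1) := by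
              refine Finset.sum_congr rfl fun m _ => ?_
              rw [hcs m i]
          _ = ∑ n : Fin r, (∑ m : Fin r, phi v r m * cs m n) * u (i.1 + n.1) := by
              simp_rw [Finset.mul_sum, Finset.sum_mul]
              rw [Finset.sum_comm]
              exact Finset.sum_congr rfl fun n _ => Finset.sum_congr rfl fun m _ => by ring
  have hcoef : ∀ j : Fin (k+2), ∃ c : Fin r → ℝ,
      ∀ i : Fin (k+2), u (i.1 + j.1) = ∑ m : Fin r, c m * u (i.1 + m.1) :=
    fun j => hcoef0 j.1 j.2
  choose C hC using hcoef
  -- the factorization A_u = Dᵀ M⁻¹ D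
  set D : Matrix (Fin r) (Fin (k+2)) ℝ := Matrix.of (fun a j => u (a.1 + j.1)) with hD
  set Cm : Matrix (Fin r) (Fin (k+2)) ℝ := Matrix.of (fun m j => C j m) with hCmdef
  have hBC : hankel (k+1) u = Dᵀ * Cm := by
    ext i j
    rw [Matrix.mul_apply]
    calc (hankel (k+1) u) i j = u (i.1 + j.1) := rfl
      _ = ∑ m : Fin r, C j m * u (i.1 + m.1) := hC j i
      _ = ∑ m : Fin r, Dᵀ i m * Cm m j := by
          refine Finset.sum_congr rfl fun m _ => ?_
          simp only [hD, hCmdef, Matrix.transpose_apply, Matrix.of_apply]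
          rw [Nat.add_comm m.1 i.1, mul_comm]
  have hDMC : D = hcorner v r * Cm := by
    ext a j
    rw [Matrix.mul_apply]
    have ha2 : a.1 < k + 2 := by have := a.2; omega
    calc D a j = u (a.1 + j.1) := rfl
      _ = ∑ m : Fin r, C j m * u (a.1 + m.1) := hC j ⟨a.1, ha2⟩
      _ = ∑ m : Fin r, hcorner v r a m * Cm m j := by
          refine Finset.sum_congr rfl fun m _ => ?_
          rw [hu (a.1 + m.1) (by have := a.2; have := m.2; omega)]
          simp only [hcorner, hCmdef, Matrix.of_apply]
          rw [mul_comm]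
  have hCmD : Cm = (hcorner v r)⁻¹ * D := by
    rw [hDMC, ← Matrix.mul_assoc, Matrix.nonsing_inv_mul _ hMdet, Matrix.one_mul]
  have hfact : hankel (k+1) u = Dᵀ * (hcorner v r)⁻¹ * D := by
    rw [hBC, hCmD, Matrix.mul_assoc]
  -- PSD of the extension
  have hDH : Dᴴ = Dᵀ := by ext a j; simp [Matrix.conjTranspose_apply]
  have hAupsd : (hankel (k+1) u).PosSemidef := by
    rw [hfact, ← hDH]
    exact hMpd.inv.posSemidef.conjTranspose_mul_mul_same D
  -- rank computations
  have hAule : (hankel (k+1) u).rank ≤ r := by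
    rw [hfact]
    calc (Dᵀ * (hcorner v r)⁻¹ * D).rank ≤ (Dᵀ * (hcorner v r)⁻¹).rank :=
          Matrix.rank_mul_le_left _ _
      _ ≤ Dᵀ.rank := Matrix.rank_mul_le_left _ _
      _ = D.rank := Matrix.rank_transpose D
      _ ≤ r := by simpa using D.rank_le_card_height
  -- generic independence of the first r columns of an extension
  have hgind : ∀ w : ℕ → ℝ, (∀ j ≤ 2*k, w j = v j) →
      LinearIndependent ℝ (fun m : Fin r => (fun i : Fin (k+2) => w (i.1 + m.1))) := by
    intro w hw
    rw [Fintype.linearIndependent_iff]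
    intro g hg
    have hg' : ∑ m : Fin r, g m • hcol k v m.1 = 0 := by
      funext i
      have h1 := congrFun hg ⟨i.1, by have := i.2; omega⟩
      simp only [Finset.sum_apply, Pi.smul_apply, smul_eq_mul, Pi.zero_apply] at h1 ⊢
      rw [← h1]
      refine Finset.sum_congr rfl fun m _ => ?_
      have : w (i.1 + m.1) = v (i.1 + m.1) :=
        hw _ (by have := i.2; have := m.2; omega)
      rw [this]
      rfl
    exact Fintype.linearIndependent_iff.1 hli g hg'
  have hrange_sub : ∀ w : ℕ → ℝ,
      Set.range (fun m : Fin r => (fun i : Fin (k+2) => w (i.1 + m.1)))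
        ⊆ Set.range (hankel (k+1) w)ᵀ := by
    rintro w _ ⟨m, rfl⟩
    exact ⟨⟨m.1, by have := m.2; omega⟩, rfl⟩
  have hrank_ge : ∀ w : ℕ → ℝ, (∀ j ≤ 2*k, w j = v j) → r ≤ (hankel (k+1) w).rank := by
    intro w hw
    rw [Matrix.rank_eq_finrank_span_cols]
    calc r = Module.finrank ℝ (Submodule.span ℝ
          (Set.range (fun m : Fin r => (fun i : Fin (k+2) => w (i.1 + m.1))))) := by
          rw [finrank_span_eq_card (hgind w hw), Fintype.card_fin]
      _ ≤ _ := Submodule.finrank_mono (Submodule.span_mono (hrange_sub w))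
  have hAvge : r ≤ (hankel k v).rank := by
    rw [Matrix.rank_eq_finrank_span_cols]
    have hsub : Set.range (fun m : Fin r => hcol k v m.1) ⊆ Set.range (hankel k v)ᵀ := by
      rintro _ ⟨m, rfl⟩
      exact ⟨⟨m.1, by have := m.2; omega⟩, rfl⟩
    calc r = Module.finrank ℝ (Submodule.span ℝ (Set.range (fun m : Fin r => hcol k v m.1))) := by
          rw [finrank_span_eq_card hli, Fintype.card_fin]
      _ ≤ _ := Submodule.finrank_mono (Submodule.span_mono hsub)
  have hAvle : (hankel k v).rank ≤ r := by
    rw [Matrix.rank_eq_finrank_span_cols]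
    have hsub : Set.range (hankel k v)ᵀ ⊆
        ↑(Submodule.span ℝ (Set.range (fun m : Fin r => hcol k v m.1))) := by
      rintro _ ⟨j, rfl⟩
      have hj2 : j.1 < k + 2 := by have := j.2; omega
      have hcolj : (hankel k v)ᵀ j = ∑ m : Fin r, C ⟨j.1, hj2⟩ m • hcol k v m.1 := by
        funext i
        have hi2 : i.1 < k + 2 := by have := i.2; omega
        have h1 := hC ⟨j.1, hj2⟩ ⟨i.1, hi2⟩
        simp only [Finset.sum_apply, Pi.smul_apply, smul_eq_mul]
        calc (hankel k v)ᵀ j i = v (i.1 + j.1) := rfl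
          _ = u (i.1 + j.1) := (hu _ (by have := i.2; have := j.2; omega)).symm
          _ = ∑ m : Fin r, C ⟨j.1, hj2⟩ m * u (i.1 + m.1) := h1
          _ = ∑ m : Fin r, C ⟨j.1, hj2⟩ m * hcol k v m.1 i := by
              refine Finset.sum_congr rfl fun m _ => ?_
              rw [hu _ (by have := i.2; have := m.2; omega)]
              rfl
      rw [hcolj]
      exact Submodule.sum_mem _ fun m _ =>
        Submodule.smul_mem _ _ (Submodule.subset_span ⟨m, rfl⟩)
    calc Module.finrank ℝ (Submodule.span ℝ (Set.range (hankel k v)ᵀ))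
        ≤ Module.finrank ℝ (Submodule.span ℝ (Set.range (fun m : Fin r => hcol k v m.1))) :=
          Submodule.finrank_mono (Submodule.span_le.2 hsub)
      _ = r := by rw [finrank_span_eq_card hli, Fintype.card_fin]
  have hAvrank : (hankel k v).rank = r := le_antisymm hAvle hAvge
  have hAurank : (hankel (k+1) u).rank = r := le_antisymm hAule (hrank_ge u hu)
  -- the canonical coefficients of the last column
  set c0 : Fin r → ℝ := (hcorner v r)⁻¹.mulVec (fun a : Fin r => v (a.1 + (k+1))) with hc0
  have huniq : ∀ w : ℕ → ℝ, (∀ j ≤ 2*k, w j = v j) → (hankel (k+1) w).PosSemidef →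
      (hankel (k+1) w).rank = r →
      w (2*k+1) = ∑ m : Fin r, c0 m * v (k + m.1) ∧
      w (2*k+2) = ∑ m : Fin r, c0 m * v (k + 1 + m.1) := by
    intro w hw hwpsd hwrank
    have hind := hgind w hw
    have hspan_eq : Submodule.span ℝ
        (Set.range (fun m : Fin r => (fun i : Fin (k+2) => w (i.1 + m.1))))
        = Submodule.span ℝ (Set.range (hankel (k+1) w)ᵀ) := by
      refine Submodule.eq_of_le_of_finrank_le (Submodule.span_mono (hrange_sub w)) ?_
      have hrk := Matrix.rank_eq_finrank_span_cols (hankel (k+1) w)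
      rw [hwrank] at hrk
      rw [finrank_span_eq_card hind, Fintype.card_fin]
      exact hrk.symm.le
    have hmem : (fun i : Fin (k+2) => w (i.1 + (k+1))) ∈
        Submodule.span ℝ (Set.range (fun m : Fin r => (fun i : Fin (k+2) => w (i.1 + m.1)))) := by
      rw [hspan_eq]
      exact Submodule.subset_span ⟨⟨k+1, by omega⟩, rfl⟩
    obtain ⟨c, hc⟩ := (Submodule.mem_span_range_iff_exists_fun ℝ).1 hmem
    have hMc : (hcorner v r).mulVec c = fun a : Fin r => v (a.1 + (k+1)) := by
      funext a
      have ha : a.1 < k+2 := by have := a.2; omega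
      have h1 := congrFun hc ⟨a.1, ha⟩
      simp only [Finset.sum_apply, Pi.smul_apply, smul_eq_mul] at h1
      calc (hcorner v r).mulVec c a = ∑ m : Fin r, v (a.1 + m.1) * c m := by
            simp [Matrix.mulVec, dotProduct, hcorner]
        _ = w (a.1 + (k+1)) := by
            rw [← h1]
            refine Finset.sum_congr rfl fun m _ => ?_
            rw [hw _ (by have := a.2; have := m.2; omega), mul_comm]
        _ = v (a.1 + (k+1)) := hw _ (by have := a.2; omega)
    have hcc0 : c = c0 := by
      rw [hc0, ← hMc, Matrix.mulVec_mulVec, Matrix.nonsing_inv_mul _ hMdet, Matrix.one_mulVec]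
    constructor
    · have h1 := congrFun hc ⟨k, by omega⟩
      simp only [Finset.sum_apply, Pi.smul_apply, smul_eq_mul] at h1
      have hk : k + (k+1) = 2*k+1 := by omega
      rw [hk] at h1
      rw [← hcc0, ← h1]
      refine Finset.sum_congr rfl fun m _ => ?_
      rw [hw (k + m.1) (by have := m.2; omega)]
    · have h1 := congrFun hc ⟨k+1, by omega⟩
      simp only [Finset.sum_apply, Pi.smul_apply, smul_eq_mul] at h1
      have hk : k + 1 + (k+1) = 2*k+2 := by omega
      rw [hk] at h1
      rw [← hcc0, ← h1]
      refine Finset.sum_congr rfl fun m _ => ?_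
      rw [hw (k + 1 + m.1) (by have := m.2; omega)]
  refine ⟨hAupsd, by rw [hAurank, hAvrank], fun w hw hwpsd hwr => ?_⟩
  obtain ⟨hw1, hw2⟩ := huniq w hw hwpsd (by rw [hwr, hAvrank])
  obtain ⟨hu1', hu2'⟩ := huniq u hu hAupsd hAurank
  exact ⟨hw1.trans hu1'.symm, hw2.trans hu2'.symm⟩

end
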